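/- Let X, Y, Z be random variables taking values in finite nonempty types on a common probability space such that Y and Z are conditionally independent given X (the Markov chain Y — X — Z), and let β ≥ 0. For each value z of Z let q(·|z) be a probability mass function on the value type of Y with q(y|z) > 0 whenever P(Z = z, Y = y) > 0, and let r be a probability mass function on the value type of Z with r(z) > 0 whenever P(Z = z) > 0. Then I(Z; Y) − β · I(X; Z) ≥ E_{(x,y)∼P_{X,Y}}[ Σ_z P(Z = z | X = x) · ( log q(y|z) − β · log( P(Z = z | X = x) / r(z) ) ) ]. -/

import Mathlib

open Classical Finset Real

/-- `μ` is a probability mass function on the finite type `Ω`. -/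
def IsPMF {Ω : Type*} [Fintype Ω] (μ : Ω → ℝ) : Prop :=
  (∀ ω, 0 ≤ μ ω) ∧ ∑ ω, μ ω = 1

open Classical in
/-- Probability that the random variable `X` takes the value `a`, under `μ`. -/
noncomputable def pr {Ω α : Type*} [Fintype Ω] (μ : Ω → ℝ) (X : Ω → α) (a : α) : ℝ :=
  ∑ ω, if X ω = a then μ ω else 0

/-- Shannon entropy `H(X)` (natural logarithm). -/
noncomputable def ent {Ω α : Type*} [Fintype Ω] [Fintype α] (μ : Ω → ℝ) (X : Ω → α) : ℝ :=
  -∑ a, pr μ X a * Real.log (pr μ X a)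

/-- Conditional entropy `H(X | Y) := H(X, Y) - H(Y)`. -/
noncomputable def condEnt {Ω α β : Type*} [Fintype Ω] [Fintype α] [Fintype β]
    (μ : Ω → ℝ) (X : Ω → α) (Y : Ω → β) : ℝ :=
  ent μ (fun ω => (X ω, Y ω)) - ent μ Y

/-- Mutual information `I(X; Y) := H(X) + H(Y) - H(X, Y)`. -/
noncomputable def mi {Ω α β : Type*} [Fintype Ω] [Fintype α] [Fintype β]
    (μ : Ω → ℝ) (X : Ω → α) (Y : Ω → β) : ℝ :=
  ent μ X + ent μ Y - ent μ (fun ω => (X ω, Y ω))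

/-- Conditional mutual information
`I(X; Y | Z) := H(X, Z) + H(Y, Z) - H(X, Y, Z) - H(Z)`. -/
noncomputable def condMI {Ω α β γ : Type*} [Fintype Ω] [Fintype α] [Fintype β] [Fintype γ]
    (μ : Ω → ℝ) (X : Ω → α) (Y : Ω → β) (Z : Ω → γ) : ℝ :=
  ent μ (fun ω => (X ω, Z ω)) + ent μ (fun ω => (Y ω, Z ω))
    - ent μ (fun ω => ((X ω, Y ω), Z ω)) - ent μ Z

/-- Independence of the random variables `X` and `Y` under `μ`. -/
def IndepRV {Ω α β : Type*} [Fintype Ω] (μ : Ω → ℝ) (X : Ω → α) (Y : Ω → β) : Prop :=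
  ∀ a b, pr μ (fun ω => (X ω, Y ω)) (a, b) = pr μ X a * pr μ Y b

/-- Kullback–Leibler divergence between pmfs on a finite type (natural logarithm). -/
noncomputable def KL {α : Type*} [Fintype α] (p q : α → ℝ) : ℝ :=
  ∑ x, p x * Real.log (p x / q x)

/-- Jensen–Shannon divergence between pmfs on a finite type. -/
noncomputable def JSD {α : Type*} [Fintype α] (p q : α → ℝ) : ℝ :=
  (1 / 2) * KL p (fun x => (p x + q x) / 2) + (1 / 2) * KL q (fun x => (p x + q x) / 2)

section VibAux
variable {Ω α γ : Type*} [Fintype Ω] {μ : Ω → ℝ}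

lemma pr_nonneg (hμ : ∀ ω, 0 ≤ μ ω) (f : Ω → α) (a : α) : 0 ≤ pr μ f a := by
  apply Finset.sum_nonneg; intro ω _; split <;> simp [hμ ω]

lemma pr_sum [Fintype α] (hμ : ∑ ω, μ ω = 1) (f : Ω → α) : ∑ a, pr μ f a = 1 := by
  unfold pr; rw [Finset.sum_comm]
  simpa [Finset.sum_ite_eq] using hμ

lemma pr_mono (hμ : ∀ ω, 0 ≤ μ ω) {f : Ω → α} {g : Ω → γ} {a : α} {b : γ}
    (h : ∀ ω, f ω = a → g ω = b) : pr μ f a ≤ pr μ g b := by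
  apply Finset.sum_le_sum; intro ω _
  by_cases hf : f ω = a
  · simp [hf, h ω hf]
  · simp only [hf, if_false]; split <;> simp [hμ ω]

lemma pr_swap (f : Ω → α) (g : Ω → γ) (a : α) (b : γ) :
    pr μ (fun ω => (f ω, g ω)) (a, b) = pr μ (fun ω => (g ω, f ω)) (b, a) := by
  unfold pr; apply Finset.sum_congr rfl; intro ω _
  simp [Prod.ext_iff, and_comm]

lemma pr_marg_right [Fintype γ] (f : Ω → α) (g : Ω → γ) (a : α) :
    ∑ c, pr μ (fun ω => (f ω, g ω)) (a, c) = pr μ f a := by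
  unfold pr; rw [Finset.sum_comm]
  refine Finset.sum_congr rfl fun ω _ => ?_
  by_cases h : f ω = a <;> simp [Prod.ext_iff, h, Finset.sum_ite_eq]

lemma pr_marg_left [Fintype α] (f : Ω → α) (g : Ω → γ) (c : γ) :
    ∑ a, pr μ (fun ω => (f ω, g ω)) (a, c) = pr μ g c := by
  unfold pr; rw [Finset.sum_comm]
  refine Finset.sum_congr rfl fun ω _ => ?_
  by_cases h : g ω = c <;> simp [Prod.ext_iff, h, Finset.sum_ite_eq]

lemma pr_marg3 {β : Type*} [Fintype γ] (f : Ω → α) (g : Ω → β) (h : Ω → γ) (a : α) (b : β) :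
    ∑ c, pr μ (fun ω => (f ω, g ω, h ω)) (a, b, c) = pr μ (fun ω => (f ω, g ω)) (a, b) := by
  unfold pr; rw [Finset.sum_comm]
  refine Finset.sum_congr rfl fun ω _ => ?_
  by_cases h1 : f ω = a <;> by_cases h2 : g ω = b <;>
    simp [Prod.ext_iff, h1, h2, Finset.sum_ite_eq]

lemma gibbs {α : Type*} [Fintype α] (p q : α → ℝ) (hp : ∀ a, 0 ≤ p a)
    (hq : ∀ a, 0 ≤ q a) (hpq : ∀ a, 0 < p a → 0 < q a) :
    (∑ a, p a) - ∑ a, q a ≤ ∑ a, p a * Real.log (p a / q a) := by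
  rw [← Finset.sum_sub_distrib]
  apply Finset.sum_le_sum; intro a _
  rcases eq_or_lt_of_le (hp a) with h | h
  · simp [← h, hq a]
  · have hqa := hpq a h
    have h1 : Real.log (q a / p a) ≤ q a / p a - 1 :=
      Real.log_le_sub_one_of_pos (by positivity)
    have h2 : Real.log (p a / q a) = - Real.log (q a / p a) := by
      rw [← Real.log_inv]; congr 1; field_simp
    have h3 : p a * (q a / p a) = q a := by field_simp
    have h4 := mul_le_mul_of_nonneg_left h1 h.le
    rw [h2]; nlinarith

lemma mi_eq [Fintype α] [Fintype γ] (hμ0 : ∀ ω, 0 ≤ μ ω) (f : Ω → α) (g : Ω → γ) :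
    mi μ f g = ∑ a, ∑ b, pr μ (fun ω => (f ω, g ω)) (a, b) *
      Real.log (pr μ (fun ω => (f ω, g ω)) (a, b) / (pr μ f a * pr μ g b)) := by
  have key : ∀ a b, pr μ (fun ω => (f ω, g ω)) (a, b) *
      Real.log (pr μ (fun ω => (f ω, g ω)) (a, b) / (pr μ f a * pr μ g b))
      = pr μ (fun ω => (f ω, g ω)) (a, b) * Real.log (pr μ (fun ω => (f ω, g ω)) (a, b))
        - pr μ (fun ω => (f ω, g ω)) (a, b) * Real.log (pr μ f a)
        - pr μ (fun ω => (f ω, g ω)) (a, b) * Real.log (pr μ g b) := by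
    intro a b
    rcases eq_or_lt_of_le (pr_nonneg hμ0 (fun ω => (f ω, g ω)) (a, b)) with h | h
    · simp [← h]
    · have ha : 0 < pr μ f a :=
        lt_of_lt_of_le h (pr_mono hμ0 fun ω hw => congrArg Prod.fst hw)
      have hb : 0 < pr μ g b :=
        lt_of_lt_of_le h (pr_mono hμ0 fun ω hw => congrArg Prod.snd hw)
      rw [Real.log_div h.ne' (by positivity), Real.log_mul ha.ne' hb.ne']; ring
  have hsum : ∑ a, ∑ b, pr μ (fun ω => (f ω, g ω)) (a, b) *
      Real.log (pr μ (fun ω => (f ω, g ω)) (a, b) / (pr μ f a * pr μ g b))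
      = (∑ a, ∑ b, pr μ (fun ω => (f ω, g ω)) (a, b)
          * Real.log (pr μ (fun ω => (f ω, g ω)) (a, b)))
        - (∑ a, ∑ b, pr μ (fun ω => (f ω, g ω)) (a, b) * Real.log (pr μ f a))
        - (∑ a, ∑ b, pr μ (fun ω => (f ω, g ω)) (a, b) * Real.log (pr μ g b)) := by
    simp only [key, Finset.sum_sub_distrib]
  have h1 : ∑ a, ∑ b, pr μ (fun ω => (f ω, g ω)) (a, b) * Real.log (pr μ f a)
      = ∑ a, pr μ f a * Real.log (pr μ f a) := by
    refine Finset.sum_congr rfl fun a _ => ?_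
    rw [← Finset.sum_mul, pr_marg_right]
  have h2 : ∑ a, ∑ b, pr μ (fun ω => (f ω, g ω)) (a, b) * Real.log (pr μ g b)
      = ∑ b, pr μ g b * Real.log (pr μ g b) := by
    rw [Finset.sum_comm]
    refine Finset.sum_congr rfl fun b _ => ?_
    rw [← Finset.sum_mul, pr_marg_left]
  unfold mi ent
  rw [hsum, h1, h2, Fintype.sum_prod_type]; ring
end VibAux

/-- Variational information bottleneck bound: under the Markov chain `Y — X — Z`,
for any variational decoder `q(y|z)` and variational marginal `r(z)`, the IB
objective `I(Z; Y) - β·I(X; Z)` is lower bounded by the VIB objective. -/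
theorem vib_lower_bound {Ω Xv Yv Zv : Type*}
    [Fintype Ω] [Nonempty Ω] [Fintype Xv] [Nonempty Xv] [Fintype Yv] [Nonempty Yv]
    [Fintype Zv] [Nonempty Zv]
    (μ : Ω → ℝ) (hμ : IsPMF μ)
    (X : Ω → Xv) (Y : Ω → Yv) (Z : Ω → Zv)
    (hMarkov : ∀ x yv zv, 0 < pr μ X x →
      pr μ (fun ω => (Y ω, Z ω, X ω)) (yv, zv, x) / pr μ X x
        = (pr μ (fun ω => (Y ω, X ω)) (yv, x) / pr μ X x)
          * (pr μ (fun ω => (Z ω, X ω)) (zv, x) / pr μ X x))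
    (β : ℝ) (hβ : 0 ≤ β)
    (q : Zv → Yv → ℝ) (hq : ∀ z, IsPMF (q z))
    (hqpos : ∀ z yv, 0 < pr μ (fun ω => (Z ω, Y ω)) (z, yv) → 0 < q z yv)
    (r : Zv → ℝ) (hr : IsPMF r)
    (hrpos : ∀ z, 0 < pr μ Z z → 0 < r z) :
    ∑ x, ∑ yv, pr μ (fun ω => (X ω, Y ω)) (x, yv) *
      (∑ z, (pr μ (fun ω => (Z ω, X ω)) (z, x) / pr μ X x) *
        (Real.log (q z yv)
          - β * Real.log ((pr μ (fun ω => (Z ω, X ω)) (z, x) / pr μ X x) / r z)))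
      ≤ mi μ Z Y - β * mi μ X Z := by
  obtain ⟨hμ0, hμ1⟩ := hμ
  -- Step 0: factorization of the joint via the Markov property
  have key1 : ∀ x yv z,
      pr μ (fun ω => (X ω, Y ω)) (x, yv) * (pr μ (fun ω => (Z ω, X ω)) (z, x) / pr μ X x)
        = pr μ (fun ω => (Y ω, Z ω, X ω)) (yv, z, x) := by
    intro x yv z
    rcases eq_or_lt_of_le (pr_nonneg hμ0 X x) with h | h
    · have h1 : pr μ (fun ω => (X ω, Y ω)) (x, yv) = 0 :=
        le_antisymm ((pr_mono hμ0 fun ω hw => congrArg Prod.fst hw).trans h.symm.le)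
          (pr_nonneg hμ0 _ _)
      have h2 : pr μ (fun ω => (Y ω, Z ω, X ω)) (yv, z, x) = 0 :=
        le_antisymm ((pr_mono hμ0 (fun ω hw => congrArg (fun p => p.2.2) hw)).trans h.symm.le)
          (pr_nonneg hμ0 _ _)
      simp [h1, h2]
    · have hM := hMarkov x yv z h
      have hsw : pr μ (fun ω => (X ω, Y ω)) (x, yv) = pr μ (fun ω => (Y ω, X ω)) (yv, x) :=
        pr_swap X Y x yv
      rw [hsw]
      field_simp at hM
      have h5 : pr μ (fun ω => (Y ω, Z ω, X ω)) (yv, z, x) * pr μ X x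
          = pr μ (fun ω => (Y ω, X ω)) (yv, x) * pr μ (fun ω => (Z ω, X ω)) (z, x) := by
        apply mul_right_cancel₀ h.ne'
        linear_combination pr μ X x * hM
      field_simp
      linarith [h5]
  -- expand the LHS into the two pieces
  have expand : ∑ x, ∑ yv, pr μ (fun ω => (X ω, Y ω)) (x, yv) *
      (∑ z, (pr μ (fun ω => (Z ω, X ω)) (z, x) / pr μ X x) *
        (Real.log (q z yv)
          - β * Real.log ((pr μ (fun ω => (Z ω, X ω)) (z, x) / pr μ X x) / r z)))
      = (∑ x, ∑ yv, ∑ z, pr μ (fun ω => (Y ω, Z ω, X ω)) (yv, z, x) * Real.log (q z yv))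
        - β * ∑ x, ∑ z, pr μ (fun ω => (Z ω, X ω)) (z, x) *
            Real.log ((pr μ (fun ω => (Z ω, X ω)) (z, x) / pr μ X x) / r z) := by
    have hx : ∀ x, ∑ yv, pr μ (fun ω => (X ω, Y ω)) (x, yv) *
        (∑ z, (pr μ (fun ω => (Z ω, X ω)) (z, x) / pr μ X x) *
          (Real.log (q z yv)
            - β * Real.log ((pr μ (fun ω => (Z ω, X ω)) (z, x) / pr μ X x) / r z)))
        = (∑ yv, ∑ z, pr μ (fun ω => (Y ω, Z ω, X ω)) (yv, z, x) * Real.log (q z yv))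
          - β * ∑ z, pr μ (fun ω => (Z ω, X ω)) (z, x) *
              Real.log ((pr μ (fun ω => (Z ω, X ω)) (z, x) / pr μ X x) / r z) := by
      intro x
      have hyv : ∀ yv, pr μ (fun ω => (X ω, Y ω)) (x, yv) *
          (∑ z, (pr μ (fun ω => (Z ω, X ω)) (z, x) / pr μ X x) *
            (Real.log (q z yv)
              - β * Real.log ((pr μ (fun ω => (Z ω, X ω)) (z, x) / pr μ X x) / r z)))
          = (∑ z, pr μ (fun ω => (Y ω, Z ω, X ω)) (yv, z, x) * Real.log (q z yv))
            - β * ∑ z, pr μ (fun ω => (X ω, Y ω)) (x, yv) *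
                ((pr μ (fun ω => (Z ω, X ω)) (z, x) / pr μ X x) *
                  Real.log ((pr μ (fun ω => (Z ω, X ω)) (z, x) / pr μ X x) / r z)) := by
        intro yv
        rw [Finset.mul_sum, Finset.mul_sum, ← Finset.sum_sub_distrib]
        refine Finset.sum_congr rfl fun z _ => ?_
        rw [← key1 x yv z]; ring
      simp only [hyv]
      rw [Finset.sum_sub_distrib, ← Finset.mul_sum]
      congr 1
      congr 1
      rw [Finset.sum_comm]
      refine Finset.sum_congr rfl fun z _ => ?_
      rw [← Finset.sum_mul, pr_marg_right]
      rcases eq_or_lt_of_le (pr_nonneg hμ0 X x) with h | h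
      · have h2 : pr μ (fun ω => (Z ω, X ω)) (z, x) = 0 :=
          le_antisymm ((pr_mono hμ0 fun ω hw => congrArg Prod.snd hw).trans h.symm.le)
            (pr_nonneg hμ0 _ _)
        rw [← h, h2]; ring
      · rw [show pr μ X x * (pr μ (fun ω => (Z ω, X ω)) (z, x) / pr μ X x *
            Real.log ((pr μ (fun ω => (Z ω, X ω)) (z, x) / pr μ X x) / r z))
          = pr μ (fun ω => (Z ω, X ω)) (z, x) *
            Real.log ((pr μ (fun ω => (Z ω, X ω)) (z, x) / pr μ X x) / r z)
            * (pr μ X x / pr μ X x) from by ring, div_self h.ne', mul_one]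
    simp only [hx]
    rw [Finset.sum_sub_distrib, ← Finset.mul_sum]
  have hA : (∑ x, ∑ yv, ∑ z, pr μ (fun ω => (Y ω, Z ω, X ω)) (yv, z, x) * Real.log (q z yv))
      = ∑ z, ∑ yv, pr μ (fun ω => (Z ω, Y ω)) (z, yv) * Real.log (q z yv) := by
    rw [Finset.sum_comm]
    have h1 : ∀ yv, (∑ x, ∑ z, pr μ (fun ω => (Y ω, Z ω, X ω)) (yv, z, x) * Real.log (q z yv))
        = ∑ z, pr μ (fun ω => (Z ω, Y ω)) (z, yv) * Real.log (q z yv) := by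
      intro yv
      rw [Finset.sum_comm]
      refine Finset.sum_congr rfl fun z _ => ?_
      rw [← Finset.sum_mul, pr_marg3, pr_swap Y Z yv z]
    simp only [h1]
    rw [Finset.sum_comm]
  have hmiZY := mi_eq hμ0 Z Y
  have decompA : ∀ z yv, pr μ (fun ω => (Z ω, Y ω)) (z, yv) *
      Real.log (pr μ (fun ω => (Z ω, Y ω)) (z, yv) / (pr μ Z z * pr μ Y yv))
      = pr μ (fun ω => (Z ω, Y ω)) (z, yv) * Real.log (q z yv)
        + pr μ (fun ω => (Z ω, Y ω)) (z, yv) *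
            Real.log (pr μ (fun ω => (Z ω, Y ω)) (z, yv) / (pr μ Z z * q z yv))
        + pr μ (fun ω => (Z ω, Y ω)) (z, yv) * (- Real.log (pr μ Y yv)) := by
    intro z yv
    rcases eq_or_lt_of_le (pr_nonneg hμ0 (fun ω => (Z ω, Y ω)) (z, yv)) with h | h
    · simp [← h]
    · have hz : 0 < pr μ Z z := lt_of_lt_of_le h (pr_mono hμ0 fun ω hw => congrArg Prod.fst hw)
      have hy : 0 < pr μ Y yv := lt_of_lt_of_le h (pr_mono hμ0 fun ω hw => congrArg Prod.snd hw)
      have hqz : 0 < q z yv := hqpos z yv h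
      rw [Real.log_div h.ne' (by positivity), Real.log_div h.ne' (by positivity),
        Real.log_mul hz.ne' hy.ne', Real.log_mul hz.ne' hqz.ne']
      ring
  have hG : (0:ℝ) ≤ ∑ z, ∑ yv, pr μ (fun ω => (Z ω, Y ω)) (z, yv) *
      Real.log (pr μ (fun ω => (Z ω, Y ω)) (z, yv) / (pr μ Z z * q z yv)) := by
    have hg := gibbs (fun w : Zv × Yv => pr μ (fun ω => (Z ω, Y ω)) w)
      (fun w : Zv × Yv => pr μ Z w.1 * q w.1 w.2)
      (fun w => pr_nonneg hμ0 _ w)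
      (fun w => mul_nonneg (pr_nonneg hμ0 _ _) ((hq w.1).1 w.2))
      (fun w hw => mul_pos
        (lt_of_lt_of_le hw (pr_mono hμ0 fun ω h2 => congrArg Prod.fst h2))
        (hqpos w.1 w.2 hw))
    simp only [Fintype.sum_prod_type] at hg
    have e1 : ∑ z, ∑ y, pr μ (fun ω => (Z ω, Y ω)) (z, y) = 1 := by
      have h2 : ∀ z, ∑ y, pr μ (fun ω => (Z ω, Y ω)) (z, y) = pr μ Z z :=
        fun z => pr_marg_right Z Y z
      simp only [h2]; exact pr_sum hμ1 Z
    have e2 : ∑ z, ∑ y, pr μ Z z * q z y = 1 := by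
      have h2 : ∀ z, ∑ y, pr μ Z z * q z y = pr μ Z z := by
        intro z; rw [← Finset.mul_sum, (hq z).2, mul_one]
      simp only [h2]; exact pr_sum hμ1 Z
    rw [e1, e2] at hg; linarith
  have hH : (0:ℝ) ≤ ∑ z, ∑ yv, pr μ (fun ω => (Z ω, Y ω)) (z, yv) * (- Real.log (pr μ Y yv)) := by
    apply Finset.sum_nonneg; intro z _; apply Finset.sum_nonneg; intro yv _
    rcases eq_or_lt_of_le (pr_nonneg hμ0 (fun ω => (Z ω, Y ω)) (z, yv)) with h | h
    · rw [← h]; simp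
    · have hy : 0 < pr μ Y yv := lt_of_lt_of_le h (pr_mono hμ0 fun ω hw => congrArg Prod.snd hw)
      have hy1 : pr μ Y yv ≤ 1 := by
        rw [← pr_sum hμ1 Y]
        exact Finset.single_le_sum (fun i _ => pr_nonneg hμ0 Y i) (Finset.mem_univ yv)
      have hlog := Real.log_nonpos hy.le hy1
      nlinarith
  have hS1 : (∑ z, ∑ yv, pr μ (fun ω => (Z ω, Y ω)) (z, yv) * Real.log (q z yv)) ≤ mi μ Z Y := by
    rw [hmiZY]
    simp only [decompA, Finset.sum_add_distrib]
    linarith [hG, hH]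
  have hmiXZ := mi_eq hμ0 X Z
  have decompB : ∀ x z, pr μ (fun ω => (Z ω, X ω)) (z, x) *
      Real.log ((pr μ (fun ω => (Z ω, X ω)) (z, x) / pr μ X x) / r z)
      = pr μ (fun ω => (X ω, Z ω)) (x, z) *
          Real.log (pr μ (fun ω => (X ω, Z ω)) (x, z) / (pr μ X x * pr μ Z z))
        + pr μ (fun ω => (Z ω, X ω)) (z, x) * Real.log (pr μ Z z / r z) := by
    intro x z
    rw [pr_swap X Z x z]
    rcases eq_or_lt_of_le (pr_nonneg hμ0 (fun ω => (Z ω, X ω)) (z, x)) with h | h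
    · simp [← h]
    · have hx : 0 < pr μ X x := lt_of_lt_of_le h (pr_mono hμ0 fun ω hw => congrArg Prod.snd hw)
      have hz : 0 < pr μ Z z := lt_of_lt_of_le h (pr_mono hμ0 fun ω hw => congrArg Prod.fst hw)
      have hrz : 0 < r z := hrpos z hz
      rw [Real.log_div (by positivity) hrz.ne', Real.log_div h.ne' hx.ne',
        Real.log_div h.ne' (by positivity), Real.log_mul hx.ne' hz.ne',
        Real.log_div hz.ne' hrz.ne']
      ring
  have hK : (0:ℝ) ≤ ∑ x, ∑ z, pr μ (fun ω => (Z ω, X ω)) (z, x) * Real.log (pr μ Z z / r z) := by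
    have e : ∑ x, ∑ z, pr μ (fun ω => (Z ω, X ω)) (z, x) * Real.log (pr μ Z z / r z)
        = ∑ z, pr μ Z z * Real.log (pr μ Z z / r z) := by
      rw [Finset.sum_comm]
      refine Finset.sum_congr rfl fun z _ => ?_
      rw [← Finset.sum_mul, pr_marg_right]
    rw [e]
    have hg := gibbs (pr μ Z) r (pr_nonneg hμ0 Z) hr.1 hrpos
    rw [pr_sum hμ1 Z, hr.2] at hg; linarith
  have hS2 : mi μ X Z ≤ ∑ x, ∑ z, pr μ (fun ω => (Z ω, X ω)) (z, x) *
      Real.log ((pr μ (fun ω => (Z ω, X ω)) (z, x) / pr μ X x) / r z) := by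
    rw [hmiXZ]
    simp only [decompB, Finset.sum_add_distrib]
    linarith [hK]
  rw [expand, hA]
  have hb2 := mul_le_mul_of_nonneg_left hS2 hβ
  linarith [hS1, hb2]
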